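/- Let (U,V) solve the Cauchy problem -(rU')' = r^{2N₂+1} e^V (r^{2N₁} e^U + 1), -(rV')' = r^{2N₁+1} e^U (r^{2N₂} e^V - 1), with U(0)=α₁, V(0)=α₂, U'(0)=V'(0)=0, and define F₂(r) = ∫₀^r t^{2N₁+1} e^{U(t)} (t^{2N₂} e^{V(t)} - 1) dt. Then F₂(r) < 2(N₁+N₂+1) for all r ≥ 0. -/

import Mathlib

open MeasureTheory Real intervalIntegral

lemma uIccSub {x y : ℝ} (hx : 0 ≤ x) (hy : 0 ≤ y) : Set.uIcc x y ⊆ Set.Ici 0 :=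
  fun t ht => (le_min hx hy).trans ht.1

lemma intInt {g : ℝ → ℝ} (hg : ContinuousOn g (Set.Ici 0)) {x y : ℝ} (hx : 0 ≤ x)
    (hy : 0 ≤ y) : IntervalIntegrable g MeasureTheory.volume x y :=
  (hg.mono (uIccSub hx hy)).intervalIntegrable

lemma primCont {g : ℝ → ℝ} (hg : ContinuousOn g (Set.Ici 0)) :
    ContinuousOn (fun x => ∫ t in (0:ℝ)..x, g t) (Set.Ici 0) := by
  intro x hx
  have hx0 : (0:ℝ) ≤ x := hx
  have hsub : Set.uIcc (0:ℝ) (x+1) ⊆ Set.Ici 0 := uIccSub le_rfl (by linarith)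
  have h1 : ContinuousOn (fun x => ∫ t in (0:ℝ)..x, g t) (Set.uIcc 0 (x+1)) :=
    intervalIntegral.continuousOn_primitive_interval
      (((hg.mono hsub).integrableOn_compact isCompact_uIcc))
  have hmem : Set.uIcc (0:ℝ) (x+1) ∈ nhdsWithin x (Set.Ici 0) := by
    rw [Set.uIcc_of_le (by linarith : (0:ℝ) ≤ x + 1)]
    rw [← Set.Ici_inter_Iic]
    exact inter_mem_nhdsWithin _ (Iic_mem_nhds (by linarith))
  exact (h1.continuousWithinAt (by
    rw [Set.uIcc_of_le (by linarith : (0:ℝ) ≤ x + 1)]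
    exact ⟨hx0, by linarith⟩)).mono_of_mem_nhdsWithin hmem

lemma primDeriv {g : ℝ → ℝ} (hg : ContinuousOn g (Set.Ici 0)) {x : ℝ} (hx : 0 < x) :
    HasDerivAt (fun y => ∫ t in (0:ℝ)..y, g t) (g x) x := by
  apply intervalIntegral.integral_hasDerivAt_right (intInt hg le_rfl hx.le)
  · exact (hg.mono Set.Ioi_subset_Ici_self).stronglyMeasurableAtFilter isOpen_Ioi x hx
  · exact (hg.mono Set.Ioi_subset_Ici_self).continuousAt (Ioi_mem_nhds hx)

lemma rderiv_eq {f W : ℝ → ℝ} (hWc : ContinuousOn W (Set.Ici 0))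
    (hWd : ContDiffOn ℝ 2 W (Set.Ioi 0)) (hf : ContinuousOn f (Set.Ici 0))
    (heq : ∀ x > (0:ℝ), HasDerivAt (fun s => s * deriv W s) (-(f x)) x) :
    ∀ r > (0:ℝ), r * deriv W r = -∫ t in (0:ℝ)..r, f t := by
  intro r hr
  set F : ℝ → ℝ := fun x => ∫ t in (0:ℝ)..x, f t with hFdef
  have hGd : ∀ x, 0 < x → HasDerivAt (fun s => s * deriv W s + F s) 0 x := by
    intro x hx
    have h1 := (heq x hx).add (hFdef ▸ primDeriv hf hx)
    rw [neg_add_cancel] at h1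
    exact h1
  have hconst : ∀ a, 0 < a → ∀ b, a ≤ b →
      b * deriv W b + F b = a * deriv W a + F a := by
    intro a ha b hab
    have hcont : ContinuousOn (fun s => s * deriv W s + F s) (Set.Icc a b) := fun x hx =>
      ((hGd x (lt_of_lt_of_le ha hx.1)).continuousAt).continuousWithinAt
    have := constant_of_has_deriv_right_zero hcont
      (fun x hx => (hGd x (lt_of_lt_of_le ha hx.1)).hasDerivWithinAt) b ⟨hab, le_rfl⟩
    simpa using this
  have hG0 : r * deriv W r + F r = 0 := by
    by_contra hne
    have hδpos : 0 < |r * deriv W r + F r| := abs_pos.mpr hne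
    set δ := |r * deriv W r + F r| with hδdef
    obtain ⟨C, hC⟩ := (isCompact_Icc (a := (0:ℝ)) (b := r)).exists_bound_of_continuousOn
      (hf.mono Set.Icc_subset_Ici_self)
    have hC0 : 0 ≤ C := (norm_nonneg (f 0)).trans (hC 0 ⟨le_rfl, hr.le⟩)
    have hWc0 : ContinuousWithinAt W (Set.Ici 0) 0 := hWc 0 Set.self_mem_Ici
    rw [Metric.continuousWithinAt_iff] at hWc0
    obtain ⟨η, hη, hηs⟩ := hWc0 (δ/4) (by positivity)
    set ε := min r (min (η/2) (δ/(4*(C+1)))) with hεdef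
    have hεpos : 0 < ε := lt_min hr (lt_min (by positivity) (by positivity))
    have hεr : ε ≤ r := min_le_left _ _
    have hεη : ε < η := lt_of_le_of_lt ((min_le_right _ _).trans (min_le_left _ _)) (by linarith)
    have hεδ : ε ≤ δ/(4*(C+1)) := (min_le_right _ _).trans (min_le_right _ _)
    obtain ⟨ξ, hξmem, hξd⟩ := exists_deriv_eq_slope W hεpos
      (hWc.mono (fun x hx => hx.1))
      ((hWd.differentiableOn two_ne_zero).mono (fun x hx => hx.1))
    have hGrξ : r * deriv W r + F r = ξ * deriv W ξ + F ξ :=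
      hconst ξ hξmem.1 r (hξmem.2.le.trans hεr)
    have hFξ : |F ξ| ≤ C * ε := by
      have hb : ∀ x ∈ Set.uIoc (0:ℝ) ξ, ‖f x‖ ≤ C := by
        intro x hx
        rw [Set.uIoc_of_le hξmem.1.le] at hx
        exact hC x ⟨hx.1.le, hx.2.trans (hξmem.2.le.trans hεr)⟩
      have h2 := intervalIntegral.norm_integral_le_of_norm_le_const hb
      rw [Real.norm_eq_abs] at h2
      calc |F ξ| ≤ C * |ξ - 0| := h2
        _ = C * ξ := by rw [sub_zero, abs_of_pos hξmem.1]
        _ ≤ C * ε := by nlinarith [hξmem.2.le]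
    have hWε : |W ε - W 0| < δ/4 := by
      have h2 := hηs (Set.mem_Ici.mpr hεpos.le)
        (by rw [Real.dist_eq, sub_zero, abs_of_pos hεpos]; exact hεη)
      rwa [Real.dist_eq] at h2
    have hξW : |ξ * deriv W ξ| ≤ |W ε - W 0| := by
      rw [hξd, sub_zero, abs_mul, abs_div, abs_of_pos hξmem.1, abs_of_pos hεpos]
      have h1 : ξ * (|W ε - W 0| / ε) ≤ ε * (|W ε - W 0| / ε) :=
        mul_le_mul_of_nonneg_right hξmem.2.le (by positivity)
      have h2 : ε * (|W ε - W 0| / ε) = |W ε - W 0| := by field_simp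
      linarith
    have hCε : C * ε ≤ δ/4 := by
      have h1 : C * ε ≤ C * (δ/(4*(C+1))) := mul_le_mul_of_nonneg_left hεδ hC0
      have h3 : C * (δ/(4*(C+1))) ≤ δ/4 := by
        rw [mul_div_assoc', div_le_div_iff₀ (by positivity) (by norm_num)]
        nlinarith
      linarith
    have hfinal : δ ≤ δ/4 + δ/4 := by
      calc δ = |ξ * deriv W ξ + F ξ| := by rw [hδdef, hGrξ]
        _ ≤ |ξ * deriv W ξ| + |F ξ| := abs_add_le _ _
        _ ≤ |W ε - W 0| + C * ε := add_le_add hξW hFξ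
        _ ≤ δ/4 + δ/4 := add_le_add hWε.le hCε
    linarith
  have hFr : F r = ∫ t in (0:ℝ)..r, f t := by rw [hFdef]
  linarith

/-- `(U, V)` is a solution of the radial Cauchy problem (5.11) with data `(α₁, α₂)`. -/
def IsSolution (N₁ N₂ : ℕ) (α₁ α₂ : ℝ) (U V : ℝ → ℝ) : Prop :=
  ContinuousOn U (Set.Ici 0) ∧ ContinuousOn V (Set.Ici 0) ∧
  ContDiffOn ℝ 2 U (Set.Ioi 0) ∧ ContDiffOn ℝ 2 V (Set.Ioi 0) ∧
  U 0 = α₁ ∧ V 0 = α₂ ∧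
  HasDerivWithinAt U 0 (Set.Ici 0) 0 ∧ HasDerivWithinAt V 0 (Set.Ici 0) 0 ∧
  (∀ r > (0 : ℝ),
    deriv (fun s => s * deriv U s) r
      = -(r ^ (2 * N₂ + 1) * Real.exp (V r) * (r ^ (2 * N₁) * Real.exp (U r) + 1))) ∧
  (∀ r > (0 : ℝ),
    deriv (fun s => s * deriv V s) r
      = -(r ^ (2 * N₁ + 1) * Real.exp (U r) * (r ^ (2 * N₂) * Real.exp (V r) - 1)))

theorem stmt10 (N₁ N₂ : ℕ) (α₁ α₂ : ℝ) (U V : ℝ → ℝ)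
    (hsol : IsSolution N₁ N₂ α₁ α₂ U V) :
    ∀ r : ℝ, 0 ≤ r →
      (∫ t in (0 : ℝ)..r,
          t ^ (2 * N₁ + 1) * Real.exp (U t) * (t ^ (2 * N₂) * Real.exp (V t) - 1))
        < 2 * (N₁ + N₂ + 1) := by
  obtain ⟨hUc, hVc, hUd, hVd, hU0, hV0, -, -, heqU, heqV⟩ := hsol
  intro r hr0
  rcases eq_or_lt_of_le hr0 with hr | hr
  · rw [← hr]
    simp only [intervalIntegral.integral_same]
    positivity
  clear hr0
  set K := 2*N₁ + 2*N₂ with hKdef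
  set f₂ : ℝ → ℝ :=
    fun t => t ^ (2 * N₁ + 1) * Real.exp (U t) * (t ^ (2 * N₂) * Real.exp (V t) - 1)
    with hf₂def
  set f₁ : ℝ → ℝ :=
    fun t => t ^ (2 * N₂ + 1) * Real.exp (V t) * (t ^ (2 * N₁) * Real.exp (U t) + 1)
    with hf₁def
  set e : ℝ → ℝ := fun t => t ^ (K + 1) * Real.exp (U t + V t) with hedef
  set aa : ℝ → ℝ := fun t => t ^ (2 * N₂ + 1) * Real.exp (V t) with haadef
  set bb : ℝ → ℝ := fun t => t ^ (2 * N₁ + 1) * Real.exp (U t) with hbbdef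
  -- continuity
  have hUe : ContinuousOn (fun t => Real.exp (U t)) (Set.Ici 0) :=
    Real.continuous_exp.comp_continuousOn hUc
  have hVe : ContinuousOn (fun t => Real.exp (V t)) (Set.Ici 0) :=
    Real.continuous_exp.comp_continuousOn hVc
  have hWe : ContinuousOn (fun t => Real.exp (U t + V t)) (Set.Ici 0) :=
    Real.continuous_exp.comp_continuousOn (hUc.add hVc)
  have hf₁c : ContinuousOn f₁ (Set.Ici 0) := by
    rw [hf₁def]
    exact ((continuous_pow _).continuousOn.mul hVe).mul
      (((continuous_pow _).continuousOn.mul hUe).add continuousOn_const)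
  have hf₂c : ContinuousOn f₂ (Set.Ici 0) := by
    rw [hf₂def]
    exact ((continuous_pow _).continuousOn.mul hUe).mul
      (((continuous_pow _).continuousOn.mul hVe).sub continuousOn_const)
  have hec : ContinuousOn e (Set.Ici 0) := by
    rw [hedef]; exact (continuous_pow _).continuousOn.mul hWe
  have haac : ContinuousOn aa (Set.Ici 0) := by
    rw [haadef]; exact (continuous_pow _).continuousOn.mul hVe
  have hbbc : ContinuousOn bb (Set.Ici 0) := by
    rw [hbbdef]; exact (continuous_pow _).continuousOn.mul hUe
  -- differentiability
  have hUdiff : ∀ x, 0 < x → DifferentiableAt ℝ U x := fun x hx =>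
    (hUd.differentiableOn two_ne_zero).differentiableAt (Ioi_mem_nhds hx)
  have hVdiff : ∀ x, 0 < x → DifferentiableAt ℝ V x := fun x hx =>
    (hVd.differentiableOn two_ne_zero).differentiableAt (Ioi_mem_nhds hx)
  have hdU1 : ContDiffOn ℝ 1 (deriv U) (Set.Ioi 0) :=
    hUd.deriv_of_isOpen isOpen_Ioi (by norm_num)
  have hdV1 : ContDiffOn ℝ 1 (deriv V) (Set.Ioi 0) :=
    hVd.deriv_of_isOpen isOpen_Ioi (by norm_num)
  have hUprod : ∀ x > (0:ℝ), HasDerivAt (fun s => s * deriv U s) (-(f₁ x)) x := by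
    intro x hx
    have hd : DifferentiableAt ℝ (fun s => s * deriv U s) x :=
      differentiableAt_fun_id.mul
        ((hdU1.differentiableOn one_ne_zero).differentiableAt (Ioi_mem_nhds hx))
    have h2 := hd.hasDerivAt
    rw [heqU x hx] at h2
    simp only [hf₁def]
    exact h2
  have hVprod : ∀ x > (0:ℝ), HasDerivAt (fun s => s * deriv V s) (-(f₂ x)) x := by
    intro x hx
    have hd : DifferentiableAt ℝ (fun s => s * deriv V s) x :=
      differentiableAt_fun_id.mul
        ((hdV1.differentiableOn one_ne_zero).differentiableAt (Ioi_mem_nhds hx))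
    have h2 := hd.hasDerivAt
    rw [heqV x hx] at h2
    simp only [hf₂def]
    exact h2
  have hrU := rderiv_eq hUc hUd hf₁c hUprod
  have hrV := rderiv_eq hVc hVd hf₂c hVprod
  -- primitives
  set M : ℝ → ℝ := fun x => ∫ t in (0:ℝ)..x, e t with hMdef
  set AA : ℝ → ℝ := fun x => ∫ t in (0:ℝ)..x, aa t with hAdef
  set BB : ℝ → ℝ := fun x => ∫ t in (0:ℝ)..x, bb t with hBdef
  set F1 : ℝ → ℝ := fun x => ∫ t in (0:ℝ)..x, f₁ t with hF1def
  set F2 : ℝ → ℝ := fun x => ∫ t in (0:ℝ)..x, f₂ t with hF2def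
  have hMc : ContinuousOn M (Set.Ici 0) := by rw [hMdef]; exact primCont hec
  have hF1c : ContinuousOn F1 (Set.Ici 0) := by rw [hF1def]; exact primCont hf₁c
  have hF2c : ContinuousOn F2 (Set.Ici 0) := by rw [hF2def]; exact primCont hf₂c
  -- pointwise integrand identities
  have hf1ea : ∀ t, f₁ t = e t + aa t := by
    intro t
    simp only [hf₁def, hedef, haadef]
    rw [Real.exp_add, hKdef, show 2*N₁ + 2*N₂ + 1 = (2*N₂+1) + 2*N₁ from by ring, pow_add]
    ring
  have hf2eb : ∀ t, f₂ t = e t - bb t := by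
    intro t
    simp only [hf₂def, hedef, hbbdef]
    rw [Real.exp_add, hKdef, show 2*N₁ + 2*N₂ + 1 = (2*N₁+1) + 2*N₂ from by ring, pow_add]
    ring
  have hF1x : ∀ x, 0 ≤ x → F1 x = M x + AA x := by
    intro x hx
    simp only [hF1def, hMdef, hAdef]
    rw [intervalIntegral.integral_congr (g := fun t => e t + aa t) (fun t _ => hf1ea t),
      intervalIntegral.integral_add (intInt hec le_rfl hx) (intInt haac le_rfl hx)]
  have hF2x : ∀ x, 0 ≤ x → F2 x = M x - BB x := by
    intro x hx
    simp only [hF2def, hMdef, hBdef]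
    rw [intervalIntegral.integral_congr (g := fun t => e t - bb t) (fun t _ => hf2eb t),
      intervalIntegral.integral_sub (intInt hec le_rfl hx) (intInt hbbc le_rfl hx)]
  -- sign facts
  have hAA : ∀ x, 0 ≤ x → 0 ≤ AA x := by
    intro x hx
    simp only [hAdef]
    refine intervalIntegral.integral_nonneg hx (fun u hu => ?_)
    simp only [haadef]
    exact mul_nonneg (pow_nonneg hu.1 _) (Real.exp_pos _).le
  have hBBmono : ∀ x, x ∈ Set.Icc 0 r → BB x ≤ BB r := by
    intro x hx
    have hsub := intervalIntegral.integral_interval_sub_left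
      (intInt hbbc le_rfl hr.le) (intInt hbbc le_rfl hx.1)
    have hnn : 0 ≤ ∫ t in x..r, bb t := by
      refine intervalIntegral.integral_nonneg hx.2 (fun u hu => ?_)
      simp only [hbbdef]
      exact mul_nonneg (pow_nonneg (hx.1.trans hu.1) _) (Real.exp_pos _).le
    simp only [hBdef]
    linarith
  -- the Pohozaev-type identity
  have hHid : r ^ (K+2) * Real.exp (U r + V r)
      = ∫ t in (0:ℝ)..r, e t * ((K:ℝ) + 2 - (F1 t + F2 t)) := by
    have hcont : ContinuousOn (fun y => y ^ (K+2) * Real.exp (U y + V y)) (Set.Icc 0 r) :=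
      ((continuous_pow _).continuousOn.mul hWe).mono Set.Icc_subset_Ici_self
    have hderiv : ∀ x ∈ Set.Ioo (0:ℝ) r,
        HasDerivWithinAt (fun y => y ^ (K+2) * Real.exp (U y + V y))
          (e x * ((K:ℝ) + 2 - (F1 x + F2 x))) (Set.Ioi x) x := by
      intro x hx
      have hU' := (hUdiff x hx.1).hasDerivAt
      have hV' := (hVdiff x hx.1).hasDerivAt
      have hmul : HasDerivAt (fun y => y ^ (K+2) * Real.exp (U y + V y))
          (↑(K+2) * x ^ (K+2-1) * Real.exp (U x + V x) +
            x ^ (K+2) * (Real.exp (U x + V x) * (deriv U x + deriv V x))) x :=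
        (hasDerivAt_pow (K+2) x).mul ((hU'.add hV').exp)
      have hgoal : HasDerivAt (fun y => y ^ (K+2) * Real.exp (U y + V y))
          (e x * ((K:ℝ) + 2 - (F1 x + F2 x))) x := by
        convert hmul using 1
        have h1 : x * deriv U x = -F1 x := by rw [hF1def]; exact hrU x hx.1
        have h2 : x * deriv V x = -F2 x := by rw [hF2def]; exact hrV x hx.1
        simp only [hedef]
        rw [show K+2-1 = K+1 from rfl, pow_succ x (K+1)]
        push_cast
        linear_combination (-(x ^ (K+1) * Real.exp (U x + V x))) * h1 +
          (-(x ^ (K+1) * Real.exp (U x + V x))) * h2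
      exact hgoal.hasDerivWithinAt
    have hint : IntervalIntegrable (fun t => e t * ((K:ℝ) + 2 - (F1 t + F2 t)))
        MeasureTheory.volume 0 r :=
      intInt (hec.mul (continuousOn_const.sub (hF1c.add hF2c))) le_rfl hr.le
    have h3 := intervalIntegral.integral_eq_sub_of_hasDeriv_right_of_le hr.le hcont hderiv hint
    rw [h3]
    simp
  -- the M² identity
  have hMsq : M r ^ 2 = ∫ t in (0:ℝ)..r, 2 * e t * M t := by
    have hcont : ContinuousOn (fun y => M y ^ 2) (Set.Icc 0 r) :=
      (hMc.pow 2).mono Set.Icc_subset_Ici_self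
    have hderiv : ∀ x ∈ Set.Ioo (0:ℝ) r,
        HasDerivWithinAt (fun y => M y ^ 2) (2 * e x * M x) (Set.Ioi x) x := by
      intro x hx
      have hMd : HasDerivAt M (e x) x := by rw [hMdef]; exact primDeriv hec hx.1
      have : HasDerivAt (fun y => M y ^ 2) (↑2 * M x ^ (2-1) * e x) x := hMd.pow 2
      have hgoal : HasDerivAt (fun y => M y ^ 2) (2 * e x * M x) x := by
        convert this using 1
        push_cast
        ring
      exact hgoal.hasDerivWithinAt
    have hint : IntervalIntegrable (fun t => 2 * e t * M t) MeasureTheory.volume 0 r :=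
      intInt ((continuousOn_const.mul hec).mul hMc) le_rfl hr.le
    have h3 := intervalIntegral.integral_eq_sub_of_hasDeriv_right_of_le hr.le hcont hderiv hint
    rw [h3]
    have hM0 : M 0 = 0 := by simp [hMdef]
    rw [hM0]
    ring
  -- comparison of integrands
  have hmono : (∫ t in (0:ℝ)..r, e t * ((K:ℝ) + 2 - (F1 t + F2 t)))
      ≤ ∫ t in (0:ℝ)..r, (e t * (((K:ℝ) + 2) + BB r) - 2 * e t * M t) := by
    refine intervalIntegral.integral_mono_on hr.le
      (intInt (hec.mul (continuousOn_const.sub (hF1c.add hF2c))) le_rfl hr.le)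
      (intInt ((hec.mul continuousOn_const).sub
        ((continuousOn_const.mul hec).mul hMc)) le_rfl hr.le)
      (fun t ht => ?_)
    have h1 : F1 t = M t + AA t := hF1x t ht.1
    have h2 : F2 t = M t - BB t := hF2x t ht.1
    have h3 : 0 ≤ AA t := hAA t ht.1
    have h4 : BB t ≤ BB r := hBBmono t ht
    have h5 : 0 ≤ e t := by
      simp only [hedef]
      exact mul_nonneg (pow_nonneg ht.1 _) (Real.exp_pos _).le
    rw [h1, h2]
    nlinarith [mul_nonneg h5 h3, mul_nonneg h5 (sub_nonneg.mpr h4)]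
  -- evaluate the RHS integral
  have hRHS : (∫ t in (0:ℝ)..r, (e t * (((K:ℝ) + 2) + BB r) - 2 * e t * M t))
      = ((K:ℝ) + 2 + BB r) * M r - M r ^ 2 := by
    have hMr : (∫ t in (0:ℝ)..r, e t) = M r := by rw [hMdef]
    rw [intervalIntegral.integral_sub (f := fun t => e t * (((K:ℝ) + 2) + BB r))
        (g := fun t => 2 * e t * M t) (intInt (hec.mul continuousOn_const) le_rfl hr.le)
        (intInt ((continuousOn_const.mul hec).mul hMc) le_rfl hr.le),
      intervalIntegral.integral_mul_const, hMr, ← hMsq]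
    ring
  -- positivity
  have hhpos : 0 < r ^ (K+2) * Real.exp (U r + V r) := by positivity
  have hMpos : 0 < M r := by
    simp only [hMdef]
    refine intervalIntegral.intervalIntegral_pos_of_pos_on
      (intInt hec le_rfl hr.le) (fun x hx => ?_) hr
    simp only [hedef]
    exact mul_pos (pow_pos hx.1 _) (Real.exp_pos _)
  -- conclude
  have hfin : 0 < ((K:ℝ) + 2 + BB r) * M r - M r ^ 2 := by linarith
  have hMlt : M r - BB r < (K:ℝ) + 2 := by nlinarith
  have hgoal2 : (∫ t in (0:ℝ)..r, f₂ t) = M r - BB r := by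
    have h6 := hF2x r hr.le
    rw [hF2def] at h6
    simpa using h6
  have hcast : ((K:ℕ):ℝ) + 2 = 2 * ((N₁:ℝ) + (N₂:ℝ) + 1) := by
    rw [hKdef]; push_cast; ring
  rw [hgoal2]  -- may need `show` if set did not abstract the goal
  push_cast
  linarith [hcast ▸ hMlt]
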